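/- In every feasible solution of the constructed instance I′, for each long leg i there is exactly one end cluster of leg i, and no cluster other than this end cluster consists solely of users lying on leg i. -/

import Mathlib

noncomputable local instance : DecidableEq ℝ := Classical.decEq ℝ

/-- The distance function on a spider with legs indexed by `Λ`. -/
noncomputable def spiderDist {Λ : Type*} [DecidableEq Λ] (P Q : Λ × ℝ) : ℝ :=
  if P.1 = Q.1 then |P.2 - Q.2| else P.2 + Q.2

/-- An instance of the arrears problem: payment duties
`S i = {(a i 0, p i 0), …, (a i (sz i), p i (sz i))}` (so `|S i| = sz i + 1`),
with strictly increasing payment dates and amounts, and budget constraints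
`(b j, q j)`, strictly increasing, all positive, with the last budget date
at least every payment date. -/
structure ArrearsInstance where
  n : ℕ
  m : ℕ
  npos : 0 < n
  mpos : 0 < m
  sz : Fin n → ℕ
  a : (i : Fin n) → Fin (sz i + 1) → ℕ
  p : (i : Fin n) → Fin (sz i + 1) → ℕ
  amono : ∀ i, StrictMono (a i)
  pmono : ∀ i, StrictMono (p i)
  apos : ∀ i k, 0 < a i k
  ppos : ∀ i k, 0 < p i k
  b : Fin m → ℕ
  q : Fin m → ℕ
  bmono : StrictMono b
  qmono : StrictMono q
  bpos : ∀ j, 0 < b j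
  qpos : ∀ j, 0 < q j
  hba : ∀ i k, a i k ≤ Finset.univ.sup b

namespace ArrearsInstance

variable (I : ArrearsInstance)

/-- `L = max(max_i a_{i,|S_i|}, b_m) + 1`. -/
def L : ℕ := ((Finset.univ.sup fun i => I.a i (Fin.last (I.sz i))) ⊔ Finset.univ.sup I.b) + 1

/-- `r = max(max_i p_{i,|S_i|}, q_m) + 1`. -/
def r : ℕ := ((Finset.univ.sup fun i => I.p i (Fin.last (I.sz i))) ⊔ Finset.univ.sup I.q) + 1

/-- `q_{j-1}`, with `q_0 = 0`. -/
def qprev (j : Fin I.m) : ℕ :=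
  if (j : ℕ) = 0 then 0 else I.q ⟨(j : ℕ) - 1, lt_of_le_of_lt (Nat.sub_le _ _) j.isLt⟩

/-- `b_{j-1}`, with `b_0 = 0`. -/
def bprev (j : Fin I.m) : ℕ :=
  if (j : ℕ) = 0 then 0 else I.b ⟨(j : ℕ) - 1, lt_of_le_of_lt (Nat.sub_le _ _) j.isLt⟩

/-- The number `q j − q (j−1)` of short legs of length `b (j−1) + 1`. -/
def qdiff (j : Fin I.m) : ℕ := I.q j - I.qprev j

/-- The legs of the spider of the constructed instance `I′`: one long leg per payment
duty, `q j − q (j−1)` short legs of length `b (j−1) + 1` for every `j`, and `r` short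
legs of length `L`. -/
def Leg : Type := Fin I.n ⊕ ((Σ j : Fin I.m, Fin (I.qdiff j)) ⊕ Fin I.r)

instance : DecidableEq I.Leg :=
  inferInstanceAs (DecidableEq (Fin I.n ⊕ ((Σ j : Fin I.m, Fin (I.qdiff j)) ⊕ Fin I.r)))

/-- The coordinate `4L − a_{i,|S_i|} + 1` of the farthest users on long leg `i`. -/
def endCoord (i : Fin I.n) : ℝ := 4 * I.L - I.a i (Fin.last (I.sz i)) + 1

/-- The coordinate `2L − a_{i,|S_i|}` of the innermost users on long leg `i`. -/
def lastCoord (i : Fin I.n) : ℝ := 2 * I.L - I.a i (Fin.last (I.sz i))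

/-- The farthest user on long leg `i`. -/
def endPt (i : Fin I.n) : I.Leg × ℝ := (Sum.inl i, I.endCoord i)

/-- The users on long leg `i`: `r` users at `4L − a_{i,|S_i|} + 1`, then
`p_{i,k+1} − p_{i,k}` users at `2L − a_{i,k}` for `k = 1, …, |S_i| − 1`, and
`r − p_{i,|S_i|}` users at `2L − a_{i,|S_i|}`. -/
def longUsers (i : Fin I.n) : Multiset (I.Leg × ℝ) :=
  Multiset.replicate I.r (I.endPt i)
  + (Finset.univ : Finset (Fin (I.sz i))).val.bind (fun k =>
      Multiset.replicate (I.p i k.succ - I.p i k.castSucc)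
        ((Sum.inl i, (2 * I.L - I.a i k.castSucc : ℝ)) : I.Leg × ℝ))
  + Multiset.replicate (I.r - I.p i (Fin.last (I.sz i)))
      ((Sum.inl i, I.lastCoord i) : I.Leg × ℝ)

/-- All users of the constructed instance `I′`: the users on the long legs, one user at
the tip of each short leg of length `b (j−1) + 1`, and one user at the tip of each of
the `r` short legs of length `L`. -/
def users : Multiset (I.Leg × ℝ) :=
  (Finset.univ : Finset (Fin I.n)).val.bind I.longUsers
  + (Finset.univ : Finset (Σ j : Fin I.m, Fin (I.qdiff j))).val.map
      (fun s => ((Sum.inr (Sum.inl s), (I.bprev s.1 + 1 : ℝ)) : I.Leg × ℝ))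
  + (Finset.univ : Finset (Fin I.r)).val.map
      (fun t => ((Sum.inr (Sum.inr t), (I.L : ℝ)) : I.Leg × ℝ))

/-- A feasible solution of `I′`: a partition of the users into clusters, each containing
at least `r` users and having diameter at most `2L`. -/
def Feasible (P : Multiset (Multiset (I.Leg × ℝ))) : Prop :=
  P.sum = I.users ∧
  ∀ C ∈ P, I.r ≤ Multiset.card C ∧ ∀ x ∈ C, ∀ y ∈ C, spiderDist x y ≤ 2 * I.L

end ArrearsInstance


namespace ArrearsInstance

variable (I : ArrearsInstance)

lemma a_add_one_le_L (j : Fin I.n) (k : Fin (I.sz j + 1)) : I.a j k + 1 ≤ I.L := by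
  have h1 : I.a j k ≤ I.a j (Fin.last (I.sz j)) := (I.amono j).monotone (Fin.le_last k)
  have h2 : I.a j (Fin.last (I.sz j)) ≤ Finset.univ.sup fun i => I.a i (Fin.last (I.sz i)) :=
    Finset.le_sup (f := fun i => I.a i (Fin.last (I.sz i))) (Finset.mem_univ j)
  have h3 : (Finset.univ.sup fun i => I.a i (Fin.last (I.sz i))) ≤
      (Finset.univ.sup fun i => I.a i (Fin.last (I.sz i))) ⊔ Finset.univ.sup I.b := le_sup_left
  unfold L
  omega

lemma p_add_one_le_r (j : Fin I.n) (k : Fin (I.sz j + 1)) : I.p j k + 1 ≤ I.r := by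
  have h1 : I.p j k ≤ I.p j (Fin.last (I.sz j)) := (I.pmono j).monotone (Fin.le_last k)
  have h2 : I.p j (Fin.last (I.sz j)) ≤ Finset.univ.sup fun i => I.p i (Fin.last (I.sz i)) :=
    Finset.le_sup (f := fun i => I.p i (Fin.last (I.sz i))) (Finset.mem_univ j)
  have h3 : (Finset.univ.sup fun i => I.p i (Fin.last (I.sz i))) ≤
      (Finset.univ.sup fun i => I.p i (Fin.last (I.sz i))) ⊔ Finset.univ.sup I.q := le_sup_left
  unfold r
  omega

lemma a_real_le (j : Fin I.n) (k : Fin (I.sz j + 1)) : (I.a j k : ℝ) + 1 ≤ (I.L : ℝ) := by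
  exact_mod_cast Nat.cast_le.mpr (I.a_add_one_le_L j k)

lemma L_real_pos : (1 : ℝ) ≤ (I.L : ℝ) := by
  have : 1 ≤ I.L := Nat.succ_le_of_lt (Nat.succ_pos _)
  exact_mod_cast this

/-- Every user on long leg `j` lies on leg `j` at a nonnegative coordinate. -/
lemma mem_longUsers_cases {j : Fin I.n} {x : I.Leg × ℝ} (hx : x ∈ I.longUsers j) :
    x.1 = Sum.inl j ∧ 0 ≤ x.2 := by
  have hA := I.a_real_le j (Fin.last (I.sz j))
  have hL := I.L_real_pos
  simp only [longUsers, Multiset.mem_add, Multiset.mem_bind, Multiset.mem_replicate,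
    Finset.mem_val, Finset.mem_univ, true_and] at hx
  rcases hx with (⟨_, rfl⟩ | ⟨k, _, rfl⟩) | ⟨_, rfl⟩
  · refine ⟨rfl, ?_⟩
    simp only [endPt, endCoord]
    linarith
  · refine ⟨rfl, ?_⟩
    have hk := I.a_real_le j k.castSucc
    simp only
    linarith
  · refine ⟨rfl, ?_⟩
    simp only [lastCoord]
    linarith

/-- Every user has a nonnegative coordinate. -/
lemma users_coord_nonneg {x : I.Leg × ℝ} (hx : x ∈ I.users) : 0 ≤ x.2 := by
  have hL := I.L_real_pos
  simp only [users, Multiset.mem_add, Multiset.mem_bind, Multiset.mem_map,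
    Finset.mem_val, Finset.mem_univ, true_and] at hx
  rcases hx with (⟨j, hj⟩ | ⟨s, rfl⟩) | ⟨t, rfl⟩
  · exact (I.mem_longUsers_cases hj).2
  · simp only
    positivity
  · simp only
    linarith

/-- The telescoping sum over the middle users. -/
lemma middle_sum (i : Fin I.n) :
    (∑ k : Fin (I.sz i), (I.p i k.succ - I.p i k.castSucc)) =
      I.p i (Fin.last (I.sz i)) - I.p i 0 := by
  set f : ℕ → ℕ := fun t => I.p i ⟨min t (I.sz i), by omega⟩ with hf
  have hmono : Monotone f := by
    intro s t hst
    exact (I.pmono i).monotone (by simp only [Fin.mk_le_mk]; omega)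
  have htel := Finset.sum_range_tsub hmono (I.sz i)
  have hconv : (∑ k : Fin (I.sz i), (I.p i k.succ - I.p i k.castSucc)) =
      ∑ t ∈ Finset.range (I.sz i), (f (t + 1) - f t) := by
    rw [← Fin.sum_univ_eq_sum_range (fun t => f (t + 1) - f t) (I.sz i)]
    refine Finset.sum_congr rfl fun k _ => ?_
    have h1 : f ((k : ℕ) + 1) = I.p i k.succ := by
      simp only [hf]
      congr 1
      exact Fin.ext (by simp [Nat.min_eq_left (Nat.succ_le_of_lt k.isLt)])
    have h2 : f (k : ℕ) = I.p i k.castSucc := by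
      simp only [hf]
      congr 1
      exact Fin.ext (by simp [Nat.min_eq_left (le_of_lt k.isLt)])
    rw [h1, h2]
  have hlast : f (I.sz i) = I.p i (Fin.last (I.sz i)) := by
    simp only [hf]
    congr 1
    exact Fin.ext (by simp [Fin.last])
  have h0 : f 0 = I.p i 0 := by
    simp only [hf]
    congr 1
  rw [hconv, htel, hlast, h0]

/-- Master counting bound for predicates that fail off leg `i`. -/
lemma countP_users_le (i : Fin I.n) (pred : I.Leg × ℝ → Prop) [DecidablePred pred]
    (hoff : ∀ x : I.Leg × ℝ, x ∈ I.users → x.1 ≠ Sum.inl i → ¬ pred x)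
    {e f : ℕ}
    (hend : Multiset.countP pred (Multiset.replicate I.r (I.endPt i)) ≤ e)
    (hlast : Multiset.countP pred (Multiset.replicate (I.r - I.p i (Fin.last (I.sz i)))
      ((Sum.inl i, I.lastCoord i) : I.Leg × ℝ)) ≤ f) :
    Multiset.countP pred I.users ≤ e + (I.p i (Fin.last (I.sz i)) - I.p i 0) + f := by
  have hmemB : ∀ x : I.Leg × ℝ,
      x ∈ (Finset.univ : Finset (Σ j : Fin I.m, Fin (I.qdiff j))).val.map
        (fun s => ((Sum.inr (Sum.inl s), (I.bprev s.1 + 1 : ℝ)) : I.Leg × ℝ)) → x ∈ I.users := by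
    intro x hx
    simp only [users, Multiset.mem_add]
    exact Or.inl (Or.inr hx)
  have hmemC : ∀ x : I.Leg × ℝ,
      x ∈ (Finset.univ : Finset (Fin I.r)).val.map
        (fun t => ((Sum.inr (Sum.inr t), (I.L : ℝ)) : I.Leg × ℝ)) → x ∈ I.users := by
    intro x hx
    simp only [users, Multiset.mem_add]
    exact Or.inr hx
  have hmemA : ∀ x : I.Leg × ℝ,
      x ∈ (Finset.univ : Finset (Fin I.n)).val.bind I.longUsers → x ∈ I.users := by
    intro x hx
    simp only [users, Multiset.mem_add]
    exact Or.inl (Or.inl hx)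
  rw [show I.users = (Finset.univ : Finset (Fin I.n)).val.bind I.longUsers
    + (Finset.univ : Finset (Σ j : Fin I.m, Fin (I.qdiff j))).val.map
      (fun s => ((Sum.inr (Sum.inl s), (I.bprev s.1 + 1 : ℝ)) : I.Leg × ℝ))
    + (Finset.univ : Finset (Fin I.r)).val.map
      (fun t => ((Sum.inr (Sum.inr t), (I.L : ℝ)) : I.Leg × ℝ)) from rfl]
  rw [Multiset.countP_add, Multiset.countP_add]
  have hB : Multiset.countP pred ((Finset.univ : Finset (Σ j : Fin I.m, Fin (I.qdiff j))).val.map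
      (fun s => ((Sum.inr (Sum.inl s), (I.bprev s.1 + 1 : ℝ)) : I.Leg × ℝ))) = 0 := by
    rw [Multiset.countP_eq_zero]
    intro x hx
    refine hoff x (hmemB x hx) ?_
    obtain ⟨s, _, rfl⟩ := Multiset.mem_map.mp hx
    exact Sum.inr_ne_inl
  have hC : Multiset.countP pred ((Finset.univ : Finset (Fin I.r)).val.map
      (fun t => ((Sum.inr (Sum.inr t), (I.L : ℝ)) : I.Leg × ℝ))) = 0 := by
    rw [Multiset.countP_eq_zero]
    intro x hx
    refine hoff x (hmemC x hx) ?_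
    obtain ⟨t, _, rfl⟩ := Multiset.mem_map.mp hx
    exact Sum.inr_ne_inl
  rw [hB, hC, add_zero, add_zero]
  -- split the bind over legs
  have hiu : i ∈ (Finset.univ : Finset (Fin I.n)).val := Finset.mem_univ i
  have hsplit : (Finset.univ : Finset (Fin I.n)).val =
      i ::ₘ ((Finset.univ : Finset (Fin I.n)).val.erase i) := (Multiset.cons_erase hiu).symm
  rw [hsplit, Multiset.cons_bind, Multiset.countP_add]
  have hrest : Multiset.countP pred
      (((Finset.univ : Finset (Fin I.n)).val.erase i).bind I.longUsers) = 0 := by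
    rw [Multiset.countP_eq_zero]
    intro x hx
    obtain ⟨j, hj, hxj⟩ := Multiset.mem_bind.mp hx
    have hji : j ≠ i := by
      intro h
      subst h
      exact (Finset.univ.nodup).notMem_erase hj
    have hx1 := (I.mem_longUsers_cases hxj).1
    refine hoff x (hmemA x ?_) ?_
    · exact Multiset.mem_bind.mpr ⟨j, Multiset.mem_of_le (Multiset.erase_le _ _) hj, hxj⟩
    · rw [hx1]
      exact fun h => hji (Sum.inl.inj h)
  rw [hrest, add_zero]
  -- now bound countP on longUsers i
  unfold longUsers
  rw [Multiset.countP_add, Multiset.countP_add]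
  have hmid : Multiset.countP pred
      ((Finset.univ : Finset (Fin (I.sz i))).val.bind (fun k =>
        Multiset.replicate (I.p i k.succ - I.p i k.castSucc)
          ((Sum.inl i, (2 * I.L - I.a i k.castSucc : ℝ)) : I.Leg × ℝ))) ≤
      I.p i (Fin.last (I.sz i)) - I.p i 0 := by
    refine le_trans (Multiset.countP_le_card _ _) ?_
    rw [Multiset.card_bind]
    have : ((Finset.univ : Finset (Fin (I.sz i))).val.map
        (Multiset.card ∘ fun k => Multiset.replicate (I.p i k.succ - I.p i k.castSucc)
          ((Sum.inl i, (2 * I.L - I.a i k.castSucc : ℝ)) : I.Leg × ℝ))).sum =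
        ∑ k : Fin (I.sz i), (I.p i k.succ - I.p i k.castSucc) := by
      refine congrArg Multiset.sum (Multiset.map_congr rfl ?_)
      intro k _
      simp [Function.comp]
    rw [this, I.middle_sum i]
  calc Multiset.countP pred (Multiset.replicate I.r (I.endPt i)) + _ + _
      ≤ e + (I.p i (Fin.last (I.sz i)) - I.p i 0) + f := by
        exact add_le_add (add_le_add hend hmid) hlast

end ArrearsInstance

open ArrearsInstance in
/-- In every feasible solution of the constructed instance `I′`, for each long leg `i`
there is exactly one end cluster of leg `i` (counted with multiplicity), and no cluster
other than this end cluster consists solely of users lying on leg `i`. -/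
theorem end_cluster_unique (I : ArrearsInstance)
    (P : Multiset (Multiset (I.Leg × ℝ))) (hP : I.Feasible P) :
    ∀ i : Fin I.n,
      (P.countP fun C => I.endPt i ∈ C) = 1 ∧
      ∀ C ∈ P, (∀ x ∈ C, x.1 = Sum.inl i) → I.endPt i ∈ C := by
  classical
  obtain ⟨hsum, hfeas⟩ := hP
  intro i
  have hL := I.L_real_pos
  have hA := I.a_real_le i (Fin.last (I.sz i))
  have hpr := I.p_add_one_le_r i (Fin.last (I.sz i))
  have hp0 := I.ppos i 0
  have hsub : ∀ C ∈ P, C ≤ I.users := by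
    intro C hC
    rw [← hsum]
    exact Multiset.single_le_sum (fun x _ => Multiset.zero_le x) C hC
  set pred1 : I.Leg × ℝ → Prop := fun x => spiderDist x (I.endPt i) ≤ 2 * (I.L : ℝ)
    with hpred1
  have hend1 : ¬ pred1 ((Sum.inl i, I.lastCoord i) : I.Leg × ℝ) := by
    simp only [hpred1, spiderDist, endPt, lastCoord, endCoord, eq_self_iff_true, if_true,
      not_le]
    rw [show (2 * (I.L:ℝ) - I.a i (Fin.last (I.sz i)))
        - (4 * (I.L:ℝ) - I.a i (Fin.last (I.sz i)) + 1) = -(2 * (I.L:ℝ) + 1) by ring,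
      abs_neg, abs_of_nonneg (by linarith)]
    refine lt_of_lt_of_eq ?_ (ite_cond_eq_true _ _ (eq_true rfl)).symm
    linarith
  have hoff1 : ∀ x : I.Leg × ℝ, x ∈ I.users → x.1 ≠ Sum.inl i → ¬ pred1 x := by
    intro x hx hx1
    have h0 := I.users_coord_nonneg hx
    have hx1' : x.1 ≠ (I.endPt i).1 := hx1
    simp only [hpred1, spiderDist, endPt, endCoord, not_le]
    refine lt_of_lt_of_eq ?_ (ite_cond_eq_false _ _ (eq_false hx1)).symm
    linarith
  have hbound1 : Multiset.countP pred1 I.users ≤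
      I.r + (I.p i (Fin.last (I.sz i)) - I.p i 0) + 0 :=
    I.countP_users_le i pred1 hoff1
      (le_trans (Multiset.countP_le_card _ _) (le_of_eq (Multiset.card_replicate _ _)))
      (le_of_eq (Multiset.countP_eq_zero.mpr (fun x hx => by
        rw [Multiset.eq_of_mem_replicate hx]; exact hend1)))
  have hdiam1 : ∀ C ∈ P, I.endPt i ∈ C → ∀ x ∈ C, pred1 x := by
    intro C hC hCe x hx
    exact (hfeas C hC).2 x hx _ hCe
  constructor
  · -- exactly one end cluster
    have hmem : I.endPt i ∈ I.users := by
      have h1 : I.endPt i ∈ I.longUsers i := by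
        have hr0 : I.r ≠ 0 := Nat.succ_ne_zero _
        refine Multiset.mem_add.mpr (Or.inl (Multiset.mem_add.mpr (Or.inl ?_)))
        exact Multiset.mem_replicate.mpr ⟨hr0, rfl⟩
      simp only [users, Multiset.mem_add]
      exact Or.inl (Or.inl (Multiset.mem_bind.mpr ⟨i, Finset.mem_univ i, h1⟩))
    rw [← hsum] at hmem
    obtain ⟨C0, hC0, hC0m⟩ := Multiset.mem_join.mp hmem
    have hpos : 0 < P.countP fun C => I.endPt i ∈ C :=
      Multiset.countP_pos.mpr ⟨C0, hC0, hC0m⟩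
    by_contra hne
    have h2 : 2 ≤ P.countP fun C => I.endPt i ∈ C := by omega
    rw [Multiset.countP_eq_card_filter] at h2
    set Q := P.filter (fun C => I.endPt i ∈ C) with hQ
    have hQpos : 0 < Multiset.card Q := by omega
    obtain ⟨C1, hC1⟩ := Multiset.card_pos_iff_exists_mem.mp hQpos
    obtain ⟨Q', hQ'⟩ := Multiset.exists_cons_of_mem hC1
    have hcQ' : 0 < Multiset.card Q' := by
      rw [hQ'] at h2
      rw [Multiset.card_cons] at h2
      omega
    obtain ⟨C2, hC2⟩ := Multiset.card_pos_iff_exists_mem.mp hcQ'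
    have hC2Q : C2 ∈ Q := by
      rw [hQ']
      exact Multiset.mem_cons_of_mem hC2
    have hle : C1 ::ₘ {C2} ≤ Q := by
      rw [hQ']
      exact Multiset.cons_le_cons _ (Multiset.singleton_le.mpr hC2)
    have hleP : C1 ::ₘ {C2} ≤ P := le_trans hle (Multiset.filter_le _ _)
    have hC1P : C1 ∈ P := Multiset.mem_of_le hleP (Multiset.mem_cons_self _ _)
    have hC2P : C2 ∈ P := Multiset.mem_of_le hleP (by simp)
    have hC1e : I.endPt i ∈ C1 := (Multiset.mem_filter.mp hC1).2
    have hC2e : I.endPt i ∈ C2 := (Multiset.mem_filter.mp hC2Q).2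
    have hsumle : C1 + C2 ≤ P.sum := by
      obtain ⟨R, hR⟩ := Multiset.le_iff_exists_add.mp hleP
      rw [hR, Multiset.sum_add, Multiset.sum_cons, Multiset.sum_singleton]
      exact le_add_right le_rfl
    have hsub2 : C1 + C2 ≤ I.users := hsum ▸ hsumle
    have hall : ∀ x ∈ C1 + C2, pred1 x := by
      intro x hx
      rcases Multiset.mem_add.mp hx with h | h
      · exact hdiam1 C1 hC1P hC1e x h
      · exact hdiam1 C2 hC2P hC2e x h
    have hfil : C1 + C2 ≤ I.users.filter pred1 :=
      Multiset.le_filter.mpr ⟨hsub2, hall⟩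
    have hcard := Multiset.card_le_card hfil
    rw [Multiset.card_add, ← Multiset.countP_eq_card_filter] at hcard
    have hr1 := (hfeas C1 hC1P).1
    have hr2 := (hfeas C2 hC2P).1
    have hfin := le_trans hcard hbound1
    omega
  · -- no other cluster lies entirely on leg i
    intro C hC hall
    by_contra hne
    set pred2 : I.Leg × ℝ → Prop := fun x => x.1 = Sum.inl i ∧ x ≠ I.endPt i with hpred2
    have hoff2 : ∀ x : I.Leg × ℝ, x ∈ I.users → x.1 ≠ Sum.inl i → ¬ pred2 x :=
      fun x _ hx1 h => hx1 h.1
    have hbound2 : Multiset.countP pred2 I.users ≤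
        0 + (I.p i (Fin.last (I.sz i)) - I.p i 0) + (I.r - I.p i (Fin.last (I.sz i))) :=
      I.countP_users_le i pred2 hoff2
        (le_of_eq (Multiset.countP_eq_zero.mpr (fun x hx => by
          rw [Multiset.eq_of_mem_replicate hx]
          exact fun h => h.2 rfl)))
        (le_trans (Multiset.countP_le_card _ _) (le_of_eq (Multiset.card_replicate _ _)))
    have hfil : C ≤ I.users.filter pred2 :=
      Multiset.le_filter.mpr ⟨hsub C hC, fun x hx => ⟨hall x hx, fun h => hne (h ▸ hx)⟩⟩
    have hcard := Multiset.card_le_card hfil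
    rw [← Multiset.countP_eq_card_filter] at hcard
    have hr := (hfeas C hC).1
    have hfin := le_trans hcard hbound2
    have hmono0 : I.p i 0 ≤ I.p i (Fin.last (I.sz i)) := (I.pmono i).monotone (Fin.zero_le _)
    omega
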